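/- There is no J_4-free simple graph G with G → (3,3)^e; equivalently, the edge Folkman number F_e(3,3;J_4) does not exist. -/

import Mathlib

/-- `G → (3,3)ᵉ`: every 2-coloring of the edges of `G` contains three pairwise adjacent
vertices whose three connecting edges all have the same color. -/
def EdgeArrows33 {V : Type*} (G : SimpleGraph V) : Prop :=
  ∀ c : Sym2 V → Bool, ∃ x y z : V,
    G.Adj x y ∧ G.Adj x z ∧ G.Adj y z ∧
    c s(x, y) = c s(x, z) ∧ c s(x, z) = c s(y, z)

/-- `G` is `H`-free: `G` contains no (not necessarily induced) subgraph isomorphic to `H`,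
i.e. there is no injective graph homomorphism from `H` to `G`. -/
def HFree {W V : Type*} (H : SimpleGraph W) (G : SimpleGraph V) : Prop :=
  ¬ ∃ f : H →g G, Function.Injective f

/-- `J₄ = K₄ - e`: the complete graph on four vertices minus the edge `{0, 1}`. -/
def J4 : SimpleGraph (Fin 4) :=
  (SimpleGraph.fromRel (fun i j => i = 0 ∧ j = 1))ᶜ

/-- The edge Folkman number `F_e(3,3;H)`, as an element of `ℕ∞`: the least `n`
admitting an `H`-free graph on `n` vertices arrowing `(3,3)ᵉ`. -/
noncomputable def folkmanE {W : Type*} (H : SimpleGraph W) : ℕ∞ :=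
  sInf {n : ℕ∞ | ∃ m : ℕ, (m : ℕ∞) = n ∧
    ∃ G : SimpleGraph (Fin m), HFree H G ∧ EdgeArrows33 G}

lemma unique_common {V : Type} {G : SimpleGraph V} (hf : HFree J4 G)
    {a b w z : V} (hab : G.Adj a b) (hwa : G.Adj w a) (hwb : G.Adj w b)
    (hza : G.Adj z a) (hzb : G.Adj z b) : w = z := by
  by_contra hwz
  apply hf
  refine ⟨⟨![w, z, a, b], ?_⟩, ?_⟩
  · intro i j hij
    fin_cases i <;> fin_cases j <;>
      simp_all [J4, SimpleGraph.fromRel_adj, Matrix.cons_val_zero, Matrix.cons_val_one] <;>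
      first
        | exact hwa | exact hwb | exact hza | exact hzb | exact hab
        | exact hwa.symm | exact hwb.symm | exact hza.symm | exact hzb.symm | exact hab.symm
  · intro i j hij
    fin_cases i <;> fin_cases j <;> simp_all <;>
      first
        | rfl
        | (exact absurd hij hwz) | (exact absurd hij.symm hwz)
        | (exact absurd hij hwa.ne') | (exact absurd hij.symm hwa.ne')
        | (exact absurd hij hwb.ne') | (exact absurd hij.symm hwb.ne')
        | (exact absurd hij hza.ne') | (exact absurd hij.symm hza.ne')
        | (exact absurd hij hzb.ne') | (exact absurd hij.symm hzb.ne')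
        | (exact absurd hij hab.ne) | (exact absurd hij.symm hab.ne)

theorem stmt_16 :
    (∀ (V : Type) (G : SimpleGraph V), HFree J4 G → ¬ EdgeArrows33 G) ∧
    folkmanE J4 = ⊤ := by
  have main : ∀ (V : Type) (G : SimpleGraph V), HFree J4 G → ¬ EdgeArrows33 G := by
    intro V G hf harr
    classical
    letI : LinearOrder V := @IsWellOrder.linearOrder V WellOrderingRel _
    let c : Sym2 V → Bool := Sym2.lift
      ⟨fun x y => decide (∃ w, G.Adj w x ∧ G.Adj w y ∧ w < x ∧ w < y), by
        intro x y
        simp only [decide_eq_decide]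
        constructor <;> (rintro ⟨w, h1, h2, h3, h4⟩; exact ⟨w, h2, h1, h4, h3⟩)⟩
    have hc : ∀ x y : V, c s(x, y) = decide (∃ w, G.Adj w x ∧ G.Adj w y ∧ w < x ∧ w < y) :=
      fun x y => rfl
    -- key: for a triangle a,b,c' with a minimal, c s(b,c') = true and c s(a,b) = false
    have key : ∀ a b d : V, G.Adj a b → G.Adj a d → G.Adj b d → a < b → a < d →
        c s(b, d) = true ∧ c s(a, b) = false := by
      intro a b d hab had hbd h1 h2
      constructor
      · rw [hc, decide_eq_true_iff]
        exact ⟨a, hab, had, h1, h2⟩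
      · rw [hc, decide_eq_false_iff_not]
        rintro ⟨w, hwa, hwb, hw1, hw2⟩
        have := unique_common hf hab hwa hwb had.symm hbd.symm
        subst this
        exact absurd h2 (not_lt.2 hw1.le)
    obtain ⟨x, y, z, hxy, hxz, hyz, e1, e2⟩ := harr c
    have hxyne := hxy.ne
    have hxzne := hxz.ne
    have hyzne := hyz.ne
    have sxy : (s(x,y) : Sym2 V) = s(y,x) := Sym2.eq_swap
    have sxz : (s(x,z) : Sym2 V) = s(z,x) := Sym2.eq_swap
    have syz : (s(y,z) : Sym2 V) = s(z,y) := Sym2.eq_swap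
    rcases lt_trichotomy x y with h1 | h1 | h1
    · rcases lt_trichotomy x z with h2 | h2 | h2
      · -- x min
        obtain ⟨ht, hfalse⟩ := key x y z hxy hxz hyz h1 h2
        have E : c s(x, y) = c s(y, z) := e1.trans e2
        rw [hfalse, ht] at E
        exact absurd E (by simp)
      · exact absurd h2 hxzne
      · -- z min (z < x < y)
        obtain ⟨ht, hfalse⟩ := key z x y hxz.symm hyz.symm hxy h2 (h2.trans h1)
        rw [← sxz] at hfalse
        rw [ht, hfalse] at e1
        exact absurd e1 (by simp)
    · exact absurd h1 hxyne
    · rcases lt_trichotomy y z with h2 | h2 | h2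
      · -- y min
        obtain ⟨ht, hfalse⟩ := key y x z hxy.symm hyz hxz h1 h2
        rw [← sxy] at hfalse
        rw [hfalse, ht] at e1
        exact absurd e1 (by simp)
      · exact absurd h2 hyzne
      · -- z min (z < y < x)
        obtain ⟨ht, hfalse⟩ := key z x y hxz.symm hyz.symm hxy (h2.trans h1) h2
        rw [← sxz] at hfalse
        rw [ht, hfalse] at e1
        exact absurd e1 (by simp)
  refine ⟨main, ?_⟩
  rw [folkmanE]
  convert sInf_empty
  · rfl
  rw [Set.eq_empty_iff_forall_notMem]
  rintro n ⟨m, -, G, hfree, harr⟩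
  exact main (Fin m) G hfree harr
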